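/- A finitely branching directed graph is locally finite (i.e., for all vertices s and t, the set of directed paths from s to t is finite) if and only if it contains no quasicycle. -/

import Mathlib

/-- `IsPath src tgt p s t` : the list of edges `p` forms a directed path from `s` to `t`
in the directed multigraph with edge-endpoint maps `src`, `tgt`. -/
def IsPath {V E : Type*} (src tgt : E → V) : List E → V → V → Prop
  | [], s, t => s = t
  | e :: p, s, t => src e = s ∧ IsPath src tgt p (tgt e) t

/-- Finitely branching: every vertex has finitely many outgoing edges. -/
def FinitelyBranching {V E : Type*} (src : E → V) : Prop :=
  ∀ v : V, {e : E | src e = v}.Finite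

/-- Locally finite: for all vertices s, t the set of directed paths from s to t is finite. -/
def GraphLocallyFinite {V E : Type*} (src tgt : E → V) : Prop :=
  ∀ s t : V, {p : List E | IsPath src tgt p s t}.Finite

/-- A quasicycle: an infinite chain of composable edges `c 0 → c 1 → ⋯` together with a
vertex `t` such that there is a directed path from the source of each `c i` to `t`. -/
def Quasicycle {V E : Type*} (src tgt : E → V) : Prop :=
  ∃ (c : ℕ → E) (t : V), (∀ i, tgt (c i) = src (c (i + 1))) ∧
    ∀ i, ∃ p, IsPath src tgt p (src (c i)) t

lemma isPath_append {V E : Type*} {src tgt : E → V} {p q : List E} {s m t : V}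
    (hp : IsPath src tgt p s m) (hq : IsPath src tgt q m t) :
    IsPath src tgt (p ++ q) s t := by
  induction p generalizing s with
  | nil => cases hp; exact hq
  | cons e p ih => exact ⟨hp.1, ih hp.2⟩

lemma isPath_chain {V E : Type*} {src tgt : E → V} {c : ℕ → E}
    (hc : ∀ i, tgt (c i) = src (c (i + 1))) (i : ℕ) :
    IsPath src tgt ((List.range i).map c) (src (c 0)) (src (c i)) := by
  induction i with
  | zero => rfl
  | succ n ih =>
    rw [List.range_succ, List.map_append]
    exact isPath_append ih ⟨rfl, hc n⟩

lemma step_lemma {V E : Type*} {src tgt : E → V} (hfb : FinitelyBranching src) {v t : V}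
    (h : {p : List E | IsPath src tgt p v t}.Infinite) :
    ∃ e, src e = v ∧ {p : List E | IsPath src tgt p (tgt e) t}.Infinite := by
  by_contra hcon
  push_neg at hcon
  have hsub : {p : List E | IsPath src tgt p v t} ⊆
      insert [] (⋃ e ∈ {e : E | src e = v},
        (fun q => e :: q) '' {p : List E | IsPath src tgt p (tgt e) t}) := by
    intro p hp
    cases p with
    | nil => exact Set.mem_insert _ _
    | cons e q =>
      obtain ⟨h1, h2⟩ := hp
      exact Set.mem_insert_of_mem _ (Set.mem_biUnion h1 ⟨q, h2, rfl⟩)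
  refine h (Set.Finite.subset ?_ hsub)
  refine Set.Finite.insert _ (Set.Finite.biUnion (hfb v) fun e he => ?_)
  exact Set.Finite.image _ (hcon e he)

/-- a finitely branching directed graph is locally finite iff it contains
no quasicycle. -/
theorem stmt_0 {V E : Type*} (src tgt : E → V) (hfb : FinitelyBranching src) :
    GraphLocallyFinite src tgt ↔ ¬ Quasicycle src tgt := by
  constructor
  · intro hlf hq
    obtain ⟨c, t, hc, hp⟩ := hq
    have hF := hlf (src (c 0)) t
    obtain ⟨n, hn⟩ := (hF.image List.length).bddAbove
    obtain ⟨p, hpath⟩ := hp (n + 1)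
    have hmem : ((List.range (n + 1)).map c ++ p) ∈
        {q : List E | IsPath src tgt q (src (c 0)) t} :=
      isPath_append (isPath_chain hc (n + 1)) hpath
    have hlen : ((List.range (n + 1)).map c ++ p).length ≤ n :=
      hn (Set.mem_image_of_mem _ hmem)
    simp [List.length_append] at hlen
    omega
  · intro hq s t
    by_contra hinf
    replace hinf : {p : List E | IsPath src tgt p s t}.Infinite := hinf
    have key : ∀ v : V, {p : List E | IsPath src tgt p v t}.Infinite →
        ∃ e, src e = v ∧ {p : List E | IsPath src tgt p (tgt e) t}.Infinite :=
      fun v h => step_lemma hfb h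
    choose g hg1 hg2 using key
    let f : ℕ → {e : E // {p : List E | IsPath src tgt p (tgt e) t}.Infinite} :=
      fun n => Nat.rec ⟨g s hinf, hg2 s hinf⟩
        (fun _ prev => ⟨g (tgt prev.1) prev.2, hg2 _ _⟩) n
    refine hq ⟨fun n => (f n).1, t, fun i => ?_, fun i => ?_⟩
    · exact (hg1 (tgt (f i).1) (f i).2).symm
    · cases i with
      | zero =>
        obtain ⟨p, hp⟩ := hinf.nonempty
        exact ⟨p, by rwa [show src (f 0).1 = s from hg1 s hinf]⟩
      | succ n =>
        obtain ⟨p, hp⟩ := (f n).2.nonempty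
        exact ⟨p, by rwa [show src (f (n + 1)).1 = tgt (f n).1 from hg1 _ _]⟩
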